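/- Let U ⊆ ℂ be open, let p ∈ ℂ and ρ > 0 be such that the circle {z : |z−p| = ρ} is contained in U, and let f : U → ℝ be continuously differentiable. Then the circle integral ∮_{|z−p|=ρ} ∂_z f(ζ) dζ is purely imaginary, i.e. its real part is zero. -/

import Mathlib

open Complex Metric Set intervalIntegral Real

lemma fderiv_expand (f : ℂ → ℝ) (z : ℂ) (v : ℂ) :
    fderiv ℝ f z v = v.re * fderiv ℝ f z 1 + v.im * fderiv ℝ f z Complex.I := by
  have h : v = v.re • (1 : ℂ) + v.im • Complex.I := by
    simp [Complex.ext_iff]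
  calc fderiv ℝ f z v = fderiv ℝ f z (v.re • (1 : ℂ) + v.im • Complex.I) := by rw [← h]
    _ = v.re * fderiv ℝ f z 1 + v.im * fderiv ℝ f z Complex.I := by
        rw [map_add, map_smul, map_smul]; simp [smul_eq_mul]

/-- For a `C¹` real-valued function `f` on an open set `U ⊆ ℂ` containing the
circle `{|z−p| = ρ}`, the circle integral of the Wirtinger derivative
`∂_z f = ½(Df(·)(1) − i·Df(·)(i))` around that circle is purely imaginary. -/
theorem stmt_6 (U : Set ℂ) (hU : IsOpen U) (p : ℂ) (ρ : ℝ) (hρ : 0 < ρ)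
    (hsub : Metric.sphere p ρ ⊆ U) (f : ℂ → ℝ) (hf : ContDiffOn ℝ 1 f U) :
    (∮ ζ in C(p, ρ),
      (1/2 : ℂ) * (((fderiv ℝ f ζ 1 : ℝ) : ℂ)
        - Complex.I * ((fderiv ℝ f ζ Complex.I : ℝ) : ℂ))).re = 0 := by
  set g : ℂ → ℂ := fun ζ => (1/2 : ℂ) * (((fderiv ℝ f ζ 1 : ℝ) : ℂ)
      - Complex.I * ((fderiv ℝ f ζ Complex.I : ℝ) : ℂ)) with hg
  have hmem : ∀ t : ℝ, circleMap p ρ t ∈ U := fun t => hsub (circleMap_mem_sphere p hρ.le t)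
  have hfd : ContinuousOn (fun z => fderiv ℝ f z) U :=
    hf.continuousOn_fderiv_of_isOpen hU le_rfl
  have hfdiff : ∀ z ∈ U, DifferentiableAt ℝ f z := fun z hz =>
    (hf.differentiableOn one_ne_zero).differentiableAt (hU.mem_nhds hz)
  -- continuity of the integrand
  have hcm : Continuous fun t : ℝ => circleMap p ρ t := continuous_circleMap p ρ
  have hLcont : Continuous fun t : ℝ => fderiv ℝ f (circleMap p ρ t) := by
    rw [← continuousOn_univ]
    exact hfd.comp hcm.continuousOn fun t _ => hmem t
  have hev1 : Continuous fun t : ℝ => fderiv ℝ f (circleMap p ρ t) 1 :=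
    hLcont.clm_apply continuous_const
  have hevI : Continuous fun t : ℝ => fderiv ℝ f (circleMap p ρ t) Complex.I :=
    hLcont.clm_apply continuous_const
  have hgc : Continuous fun t : ℝ => g (circleMap p ρ t) := by
    rw [hg]
    exact continuous_const.mul
      ((Complex.continuous_ofReal.comp hev1).sub
        (continuous_const.mul (Complex.continuous_ofReal.comp hevI)))
  have hintegrand : Continuous fun t : ℝ =>
      deriv (circleMap p ρ) t • g (circleMap p ρ t) := by
    simp only [deriv_circleMap]
    exact (((continuous_circleMap 0 ρ).mul continuous_const)).smul hgc
  have hint : IntervalIntegrable (fun t : ℝ =>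
      deriv (circleMap p ρ) t • g (circleMap p ρ t)) MeasureTheory.volume 0 (2 * π) :=
    hintegrand.intervalIntegrable 0 (2 * π)
  -- chain rule: derivative of f along the circle
  have hF : ∀ t : ℝ, HasDerivAt (fun s => f (circleMap p ρ s))
      (fderiv ℝ f (circleMap p ρ t) (deriv (circleMap p ρ) t)) t := by
    intro t
    have h1 := (hfdiff _ (hmem t)).hasFDerivAt
    have h2 := (hasDerivAt_circleMap p ρ t)
    have h3 := h1.comp_hasDerivAt t h2
    rw [deriv_circleMap]
    exact h3
  -- pointwise identity: Re of integrand = ½ · (f ∘ circleMap)'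
  have key : ∀ t : ℝ, (deriv (circleMap p ρ) t • g (circleMap p ρ t)).re
      = (1/2 : ℝ) * fderiv ℝ f (circleMap p ρ t) (deriv (circleMap p ρ) t) := by
    intro t
    rw [fderiv_expand, deriv_circleMap, hg]
    set a := fderiv ℝ f (circleMap p ρ t) 1
    set b := fderiv ℝ f (circleMap p ρ t) Complex.I
    set w := circleMap 0 ρ t
    simp only [smul_eq_mul, Complex.mul_re, Complex.mul_im, Complex.sub_re, Complex.sub_im,
      Complex.ofReal_re, Complex.ofReal_im, Complex.I_re, Complex.I_im, Complex.div_re,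
      Complex.div_im, Complex.one_re, Complex.one_im, Complex.add_re, Complex.add_im,
      Complex.normSq, MonoidWithZeroHom.coe_mk, ZeroHom.coe_mk, Complex.re_ofNat,
      Complex.im_ofNat]
    norm_num
    ring
  -- compute the real part of the circle integral
  rw [circleIntegral]
  show Complex.reCLM (∫ t in (0:ℝ)..(2 * π), deriv (circleMap p ρ) t • g (circleMap p ρ t)) = 0
  rw [← Complex.reCLM.intervalIntegral_comp_comm hint]
  have : (∫ t in (0:ℝ)..(2 * π),
      Complex.reCLM (deriv (circleMap p ρ) t • g (circleMap p ρ t)))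
      = ∫ t in (0:ℝ)..(2 * π),
        (1/2 : ℝ) * fderiv ℝ f (circleMap p ρ t) (deriv (circleMap p ρ) t) := by
    refine intervalIntegral.integral_congr fun t _ => ?_
    simpa using key t
  rw [this]
  have hsub' : (∫ t in (0:ℝ)..(2 * π),
      (1/2 : ℝ) * fderiv ℝ f (circleMap p ρ t) (deriv (circleMap p ρ) t))
      = (1/2 : ℝ) * f (circleMap p ρ (2 * π)) - (1/2 : ℝ) * f (circleMap p ρ 0) := by
    refine intervalIntegral.integral_eq_sub_of_hasDerivAt
      (fun t _ => (hF t).const_mul (1/2 : ℝ)) ?_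
    have : Continuous fun t : ℝ =>
        (1/2 : ℝ) * fderiv ℝ f (circleMap p ρ t) (deriv (circleMap p ρ) t) := by
      simp only [deriv_circleMap]
      exact continuous_const.mul (hLcont.clm_apply ((continuous_circleMap 0 ρ).mul
        continuous_const))
    exact this.intervalIntegrable 0 (2 * π)
  rw [hsub']
  have hper : circleMap p ρ (2 * π) = circleMap p ρ 0 := by
    simpa using (periodic_circleMap p ρ) 0
  rw [hper]
  ring
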